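/- (Yao's box bound, derived form.) Suppose a game in the P-bit-fixing random oracle model for a random function G : [N] → {0,1} has winning probability at most P/N against all adversaries making Q classical queries, and the sampler makes 0 queries and the verifier makes 1 query. Then by the presampling theorem with P = √(Z(Q+1)N), any unbounded-time algorithm with Z bits of classical advice about G and Q classical queries to G (never querying the challenge point x) computes G(x) correctly on a uniformly random x ∈ [N] with probability at most 1/2 + 2√(Z(Q+1)/N). -/

import Mathlib

/- Yao's box bound, derived form.  Let δ be the success probability of an
unbounded-time algorithm with Z bits of classical advice and Q classical
queries (never querying the challenge point) at computing G(x) for uniform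
x ∈ [N].  Assume the bit-fixing security bound ν(P) ≤ P/N for every P > 0
(sampler makes 0 queries, verifier makes 1 query), and the presampling
theorem: for every P > 0, δ ≤ 1/2 + ν(P) + Z·(Q+1)/P.  Then
δ ≤ 1/2 + 2·√(Z(Q+1)/N). -/
theorem stmt_5 (N Z Q : ℕ) (hN : 0 < N) (δ : ℝ) (ν : ℝ → ℝ)
    (hbf : ∀ P : ℝ, 0 < P → ν P ≤ P / N)
    (hpresamp : ∀ P : ℝ, 0 < P →
      δ ≤ 1 / 2 + ν P + (Z : ℝ) * ((Q : ℝ) + 1) / P) :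
    δ ≤ 1 / 2 + 2 * Real.sqrt ((Z : ℝ) * ((Q : ℝ) + 1) / N) := by
  set A : ℝ := (Z : ℝ) * ((Q : ℝ) + 1) with hA
  have hNpos : (0 : ℝ) < N := by exact_mod_cast hN
  have hAnn : 0 ≤ A := by positivity
  rcases eq_or_lt_of_le hAnn with h0 | hApos
  · -- A = 0
    have hsq : Real.sqrt (A / N) = 0 := by
      rw [← h0]; simp
    rw [hsq]
    have key : ∀ ε : ℝ, 0 < ε → δ ≤ 1 / 2 + ε := by
      intro ε hε
      have hP : (0 : ℝ) < ε * N := by positivity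
      have := hpresamp (ε * N) hP
      have hν := hbf (ε * N) hP
      have : δ ≤ 1 / 2 + ε * N / N + A / (ε * N) := by
        calc δ ≤ 1 / 2 + ν (ε * N) + A / (ε * N) := this
          _ ≤ _ := by linarith
      rw [← h0] at this
      simpa [mul_div_assoc, div_self hNpos.ne'] using this
    have : δ ≤ 1 / 2 := by
      by_contra h
      push_neg at h
      have := key ((δ - 1/2) / 2) (by linarith)
      linarith
    linarith
  · -- A > 0
    have hP : (0 : ℝ) < Real.sqrt (A * N) := Real.sqrt_pos.mpr (by positivity)
    have h1 := hpresamp _ hP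
    have h2 := hbf _ hP
    set sa := Real.sqrt A with hsa
    set sn := Real.sqrt N with hsn
    have hsa2 : sa ^ 2 = A := Real.sq_sqrt hAnn
    have hsn2 : sn ^ 2 = (N : ℝ) := Real.sq_sqrt hNpos.le
    have hsapos : 0 < sa := Real.sqrt_pos.mpr hApos
    have hsnpos : 0 < sn := Real.sqrt_pos.mpr hNpos
    have hmul : Real.sqrt (A * N) = sa * sn := Real.sqrt_mul hAnn N
    have hdiv : Real.sqrt (A / N) = sa / sn := Real.sqrt_div hAnn N
    rw [hdiv]
    rw [hmul] at h1 h2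
    have e1 : sa * sn / (N : ℝ) = sa / sn := by
      rw [← hsn2]; field_simp
    have e2 : A / (sa * sn) = sa / sn := by
      rw [← hsa2]; field_simp
    rw [e1] at h2
    rw [e2] at h1
    linarith
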